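/- Let h₁, h₂ : ℝ → ℝ be continuous on [0, ∞), with h₁, h₂, deriv h₁, deriv h₂ differentiable at every t > 0. Assume h₁ 0 = h₂ 0, both h₁ and h₂ tend to the same limit m as t → ∞, and for every t > 0 with deriv h₁ t = deriv h₂ t one has deriv (deriv h₂) t < deriv (deriv h₁) t. Then h₁ t ≤ h₂ t for all t ≥ 0. -/

import Mathlib

open scoped Topology

/-- **Analytic core of the asymmetry criterion.** If `h₁, h₂` are continuous on `[0, ∞)`,
twice differentiable on `(0, ∞)`, start at the same value, tend to the same limit `m` at
infinity, and at every time `t > 0` where their derivatives agree one has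
`h₂'' t < h₁'' t`, then `h₁ t ≤ h₂ t` for all `t ≥ 0`. -/
theorem comparison_of_relaxations
    (h₁ h₂ : ℝ → ℝ)
    (hcont₁ : ContinuousOn h₁ (Set.Ici 0))
    (hcont₂ : ContinuousOn h₂ (Set.Ici 0))
    (hdiff₁ : ∀ t : ℝ, 0 < t → DifferentiableAt ℝ h₁ t)
    (hdiff₂ : ∀ t : ℝ, 0 < t → DifferentiableAt ℝ h₂ t)
    (hdiff₁' : ∀ t : ℝ, 0 < t → DifferentiableAt ℝ (deriv h₁) t)
    (hdiff₂' : ∀ t : ℝ, 0 < t → DifferentiableAt ℝ (deriv h₂) t)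
    (h0 : h₁ 0 = h₂ 0)
    (m : ℝ)
    (hlim₁ : Filter.Tendsto h₁ Filter.atTop (nhds m))
    (hlim₂ : Filter.Tendsto h₂ Filter.atTop (nhds m))
    (hcrit : ∀ t : ℝ, 0 < t → deriv h₁ t = deriv h₂ t →
      deriv (deriv h₂) t < deriv (deriv h₁) t) :
    ∀ t : ℝ, 0 ≤ t → h₁ t ≤ h₂ t := by
  by_contra hcon
  push_neg at hcon
  obtain ⟨t₀, ht₀, hgt⟩ := hcon
  set g : ℝ → ℝ := fun t => h₁ t - h₂ t with hg
  have hgcont : ContinuousOn g (Set.Ici 0) := hcont₁.sub hcont₂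
  have hgt₀ : 0 < g t₀ := by simp only [hg]; linarith
  have hg0 : g 0 = 0 := by simp [hg, h0]
  have ht₀0 : 0 < t₀ := by
    rcases ht₀.lt_or_eq with h | h
    · exact h
    · exfalso; rw [← h] at hgt₀; linarith
  have hglim : Filter.Tendsto g Filter.atTop (nhds 0) := by
    simpa using hlim₁.sub hlim₂
  have hev : ∀ᶠ t in Filter.atTop, g t < g t₀ := hglim.eventually_lt_const hgt₀
  obtain ⟨R₀, hR₀⟩ := Filter.eventually_atTop.1 hev
  set R : ℝ := max R₀ (t₀ + 1) with hRdef
  have ht₀R : t₀ < R := lt_of_lt_of_le (by linarith) (le_max_right _ _)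
  have hRbig : ∀ t, R ≤ t → g t < g t₀ := fun t ht => hR₀ t ((le_max_left _ _).trans ht)
  have h0R : (0:ℝ) ≤ R := by linarith
  obtain ⟨s, hsmem, hsmax⟩ := (isCompact_Icc (a := (0:ℝ)) (b := R)).exists_isMaxOn
    ⟨0, by constructor <;> linarith⟩ (hgcont.mono (Set.Icc_subset_Ici_self))
  have hst₀ : g t₀ ≤ g s := hsmax ⟨ht₀, ht₀R.le⟩
  have hs0 : 0 < s := by
    rcases hsmem.1.lt_or_eq with h | h
    · exact h
    · exfalso; rw [← h] at hst₀; linarith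
  have hsR : s < R := by
    rcases hsmem.2.lt_or_eq with h | h
    · exact h
    · exfalso; have := hRbig R le_rfl; rw [h] at hst₀; linarith
  have hglob : ∀ t, 0 ≤ t → g t ≤ g s := by
    intro t ht
    rcases le_or_gt t R with h | h
    · exact hsmax ⟨ht, h⟩
    · exact (hRbig t h.le).le.trans hst₀
  -- s is a local max
  have hloc : IsLocalMax g s := by
    have h1 : ∀ᶠ t in nhds s, (0:ℝ) < t := eventually_gt_nhds hs0
    exact h1.mono fun t ht => hglob t ht.le
  have hdgs : deriv g s = 0 := hloc.deriv_eq_zero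
  have hderiv_eq : ∀ t, 0 < t → deriv g t = deriv h₁ t - deriv h₂ t := fun t ht =>
    deriv_sub (hdiff₁ t ht) (hdiff₂ t ht)
  have hcriteq : deriv h₁ s = deriv h₂ s := by
    have := hderiv_eq s hs0; rw [hdgs] at this; linarith
  have hevloc : deriv g =ᶠ[nhds s] (fun t => deriv h₁ t - deriv h₂ t) :=
    (eventually_gt_nhds hs0).mono fun t ht => hderiv_eq t ht
  have hsec : 0 < deriv (deriv g) s := by
    rw [hevloc.deriv_eq, deriv_fun_sub (hdiff₁' s hs0) (hdiff₂' s hs0)]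
    have := hcrit s hs0 hcriteq; linarith
  have hdd : DifferentiableAt ℝ (deriv g) s := by
    exact ((hdiff₁' s hs0).sub (hdiff₂' s hs0)).congr_of_eventuallyEq hevloc
  -- derivative of deriv g at s is positive ⇒ deriv g > 0 just right of s
  have hslope : Filter.Tendsto (slope (deriv g) s) (𝓝[≠] s) (nhds (deriv (deriv g) s)) :=
    hasDerivAt_iff_tendsto_slope.1 hdd.hasDerivAt
  have hslope_pos : ∀ᶠ t in 𝓝[≠] s, 0 < slope (deriv g) s t :=
    hslope.eventually_const_lt hsec
  have hslope_pos' : ∀ᶠ t in 𝓝[>] s, 0 < slope (deriv g) s t :=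
    hslope_pos.filter_mono (nhdsWithin_mono s fun t ht => ne_of_gt ht)
  have hpos : ∀ᶠ t in 𝓝[>] s, 0 < deriv g t := by
    refine hslope_pos'.mp (eventually_mem_nhdsWithin.mono ?_)
    intro t ht hslopet
    have hts : 0 < t - s := sub_pos.2 ht
    have := mul_pos hslopet hts
    rw [slope_def_field] at hslopet
    have : 0 < (deriv g t - deriv g s) / (t - s) * (t - s) := mul_pos hslopet hts
    rw [div_mul_cancel₀ _ (ne_of_gt hts)] at this
    rw [hdgs] at this; linarith
  obtain ⟨u, hu, huIoo⟩ := mem_nhdsGT_iff_exists_Ioo_subset.1 hpos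
  set c : ℝ := (s + u) / 2 with hc
  have hsc : s < c := by simp only [hc]; rcases hu with hu; simp at hu; linarith
  have hcu : c < u := by simp only [hc]; rcases hu with hu; simp at hu; linarith
  have hmono : StrictMonoOn g (Set.Icc s c) := by
    apply StrictMonoOn.mono (strictMonoOn_of_deriv_pos (convex_Icc s c) ?_ ?_) le_rfl
    · exact hgcont.mono fun t ht => le_trans hs0.le ht.1
    · intro t ht
      rw [interior_Icc] at ht
      exact huIoo ⟨ht.1, ht.2.trans hcu⟩
  have : g s < g c := hmono ⟨le_rfl, hsc.le⟩ ⟨hsc.le, le_rfl⟩ hsc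
  have : g c ≤ g s := hglob c (by linarith)
  linarith
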